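/- Doubly exponential decay of badness. Suppose the strictly increasing sequences Gamma, gamma satisfy: Gamma_1 >= 2 and Gamma_k < gamma_k/2 for all k >= 1; inf over k >= 1 of Gamma_{k+1}/theta_k >= 5, where theta_k := sum_{h=1}^k (Gamma_h + gamma_h); and a_0 := sum over k >= 0 of 2^{-k} log( [2(Gamma_{k+1}+gamma_{k+1})+1]^2 ) < infinity. Let Q be a translation-invariant probability measure on Omega with p := ess sup_omega Q(omega_0 = 1 | sigma-algebra generated by (omega_j)_{j different from 0})(omega), and assume p < e^{-a_0/2}; set a := -log p - a_0/2 > 0. Then for every x in L^(l) and every k >= 0: Q(x belongs to BB_k) <= exp(-a 2^k). -/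

import Mathlib

open MeasureTheory Real

/-! Multi-scale geometry of the bad region.

The rescaled lattice `L^(l) = (lℤ)²` is identified with `ℤ²` via the bijection
`i ↦ l·i`; under this identification the rescaled distance `d_l` on `L^(l)` becomes the
ℓ¹ distance on `ℤ²`.  Accordingly, sites of `L^(l)` are represented by points of `ℤ²`
and all distances below are measured in units of `l`. -/

/-- Sites of the (rescaled) lattice. -/
abbrev Site : Type := ℤ × ℤ

/-- The ℓ¹ distance on the (rescaled) lattice, i.e. `d_l` in units of `l`. -/
def dist1 (x y : Site) : ℕ := (x.1 - y.1).natAbs + (x.2 - y.2).natAbs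

/-- The space `Ω = {0,1}^{L^(l)}`; `true` encodes `1` (bad), `false` encodes `0` (good). -/
abbrev Omega : Type := Site → Bool

/-- The closed ball `B^(l)_r(x)` of (real) radius `r` around `x`. -/
def ball1 (r : ℝ) (x : Site) : Set Site := {j | (dist1 x j : ℝ) ≤ r}

/-- `θ_k := ∑_{h=1}^k (Γ_h + γ_h)`. -/
noncomputable def thetaSeq (Γ γ : ℕ → ℝ) (k : ℕ) : ℝ := ∑ h ∈ Finset.Icc 1 k, (Γ h + γ h)

/-- `g` is a `k`-gentle atom for the bad set `B`: `g = B^(l)_{Γ_k}(x) ∩ B` for some `x ∈ B`,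
`diam_l(g) ≤ Γ_k`, and `d_l(g, B \ g) > γ_k`. -/
def kAtom (Γ γ : ℕ → ℝ) (k : ℕ) (B : Set Site) (g : Set Site) : Prop :=
  (∃ x ∈ B, g = ball1 (Γ k) x ∩ B) ∧
    (∀ x ∈ g, ∀ y ∈ g, (dist1 x y : ℝ) ≤ Γ k) ∧
    ∀ x ∈ g, ∀ y ∈ B \ g, γ k < (dist1 x y : ℝ)

/-- The union of all `k`-gentle atoms of the bad set `B`. -/
def gentleStep (Γ γ : ℕ → ℝ) (k : ℕ) (B : Set Site) : Set Site :=
  {y | ∃ g : Set Site, kAtom Γ γ k B g ∧ y ∈ g}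

/-- The `k`-bad sites `BB_k(ω)`:  `BB_0(ω) = {i : ω_i = 1}` and
`BB_k(ω) = BB_{k-1}(ω) \ GG_k(ω)`. -/
def BB (Γ γ : ℕ → ℝ) (ω : Omega) : ℕ → Set Site
  | 0 => {i | ω i = true}
  | k + 1 => BB Γ γ ω k \ gentleStep Γ γ (k + 1) (BB Γ γ ω k)

/-- The `k`-gentle sites `GG_k(ω)`:  `GG_0(ω) = {i : ω_i = 0}` and, for `k ≥ 1`,
`GG_k(ω)` is the union of the `k`-gentle atoms of `BB_{k-1}(ω)`. -/
def GG (Γ γ : ℕ → ℝ) (ω : Omega) : ℕ → Set Site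
  | 0 => {i | ω i = false}
  | k + 1 => gentleStep Γ γ (k + 1) (BB Γ γ ω k)

/-- The σ-algebra generated by the coordinates `ω_j` with `j ≠ 0`. -/
def extSigma : MeasurableSpace Omega :=
  MeasurableSpace.comap (fun (ω : Omega) (j : {j : Site // j ≠ 0}) => ω j) inferInstance

/-- A version of the conditional probability `Q(ω_0 = 1 | σ(ω_j, j ≠ 0))`. -/
noncomputable def condBadProb (Q : Measure Omega) : Omega → ℝ :=
  Q[Set.indicator {ω : Omega | ω 0 = true} (fun _ => (1 : ℝ)) | extSigma]

/-- The strength of the disorder: `p = ess sup_ω Q(ω_0 = 1 | σ(ω_j, j ≠ 0))(ω)`. -/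
noncomputable def badParam (Q : Measure Omega) : ℝ := essSup (condBadProb Q) Q

/-- Invariance of `Q` under all lattice translations of `L^(l)`. -/
def TransInvariant (Q : Measure Omega) : Prop :=
  ∀ v : Site, Measure.map (fun (ω : Omega) (x : Site) => ω (x + v)) Q = Q

/-- `a₀ := ∑_{k≥0} 2^{-k} log([2(Γ_{k+1}+γ_{k+1})+1]²)`. -/
noncomputable def aZero (Γ γ : ℕ → ℝ) : ℝ :=
  ∑' k : ℕ, (2 : ℝ) ^ (-(k : ℤ)) * Real.log ((2 * (Γ (k + 1) + γ (k + 1)) + 1) ^ 2)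
noncomputable def siteBox (r : ℤ) : Finset Site := Finset.Icc (-r) r ×ˢ Finset.Icc (-r) r

lemma dist1_self (x : Site) : dist1 x x = 0 := by simp [dist1]

lemma dist1_comm (x y : Site) : dist1 x y = dist1 y x := by
  simp only [dist1]; omega

lemma dist1_triangle (x y z : Site) : dist1 x z ≤ dist1 x y + dist1 y z := by
  simp only [dist1]; omega

lemma mem_siteBox {r : ℤ} {v : Site} :
    v ∈ siteBox r ↔ (-r ≤ v.1 ∧ v.1 ≤ r) ∧ (-r ≤ v.2 ∧ v.2 ≤ r) := by
  simp [siteBox, Finset.mem_product, Finset.mem_Icc, and_assoc]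

noncomputable def Ttree (Γ γ : ℕ → ℝ) : ℕ → Site → Finset (List Site)
  | 0, x => {[x]}
  | k + 1, x =>
    (siteBox ⌊Γ (k + 1) + γ (k + 1)⌋).biUnion fun v =>
      (Ttree Γ γ k x).biUnion fun L1 =>
        (Ttree Γ γ k (x + v)).image fun L2 => L1 ++ L2

noncomputable def Mbound (Γ γ : ℕ → ℝ) : ℕ → ℕ
  | 0 => 1
  | k + 1 => (siteBox ⌊Γ (k + 1) + γ (k + 1)⌋).card * (Mbound Γ γ k * Mbound Γ γ k)

lemma Ttree_card_le (Γ γ : ℕ → ℝ) : ∀ k x, (Ttree Γ γ k x).card ≤ Mbound Γ γ k := by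
  intro k
  induction k with
  | zero => intro x; simp [Ttree, Mbound]
  | succ k ih =>
    intro x
    rw [Ttree, Mbound]
    refine le_trans (Finset.card_biUnion_le) ?_
    refine le_trans (Finset.sum_le_card_nsmul _ _ (Mbound Γ γ k * Mbound Γ γ k) ?_) ?_
    · intro v _
      refine le_trans (Finset.card_biUnion_le) ?_
      refine le_trans (Finset.sum_le_card_nsmul _ _ (Mbound Γ γ k) ?_) ?_
      · intro L1 _
        exact le_trans (Finset.card_image_le) (ih _)
      · exact Nat.mul_le_mul_right _ (ih x)
    · simp [smul_eq_mul]

lemma Ttree_length (Γ γ : ℕ → ℝ) : ∀ k x L, L ∈ Ttree Γ γ k x → L.length = 2 ^ k := by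
  intro k
  induction k with
  | zero => intro x L hL; simp [Ttree] at hL; simp [hL]
  | succ k ih =>
    intro x L hL
    rw [Ttree] at hL
    simp only [Finset.mem_biUnion, Finset.mem_image] at hL
    obtain ⟨v, _, L1, hL1, L2, hL2, rfl⟩ := hL
    rw [List.length_append, ih _ _ hL1, ih _ _ hL2]
    ring

/-- partial sums of the `a₀` series -/
noncomputable def pSum (Γ γ : ℕ → ℝ) (k : ℕ) : ℝ :=
  ∑ j ∈ Finset.range k, (2 : ℝ) ^ (-(j : ℤ)) * Real.log ((2 * (Γ (j + 1) + γ (j + 1)) + 1) ^ 2)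

lemma card_siteBox_le {R : ℝ} (hR : 0 < R) :
    ((siteBox ⌊R⌋).card : ℝ) ≤ (2 * R + 1) ^ 2 := by
  have hr0 : (0:ℤ) ≤ ⌊R⌋ := Int.floor_nonneg.mpr hR.le
  have hcard : (siteBox ⌊R⌋).card = ((2 * ⌊R⌋ + 1).toNat) ^ 2 := by
    simp [siteBox, Finset.card_product, Int.card_Icc, sq]
    congr 1 <;> omega
  rw [hcard]
  have h1 : (((2 * ⌊R⌋ + 1).toNat : ℝ)) ≤ 2 * R + 1 := by
    have h2 : (((2 * ⌊R⌋ + 1).toNat : ℤ) : ℝ) = ((2 * ⌊R⌋ + 1 : ℤ) : ℝ) := by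
      congr 1; omega
    push_cast at h2 ⊢
    rw [h2]
    have := Int.floor_le R
    linarith
  have h0 : (0:ℝ) ≤ ((2 * ⌊R⌋ + 1).toNat : ℝ) := by positivity
  push_cast
  exact pow_le_pow_left₀ h0 h1 2

lemma Mbound_le_exp (Γ γ : ℕ → ℝ) (hΓpos : ∀ k, 1 ≤ k → 0 < Γ k) (hγpos : ∀ k, 1 ≤ k → 0 < γ k) :
    ∀ k, (Mbound Γ γ k : ℝ) ≤ Real.exp (2 ^ k * pSum Γ γ k / 2) := by
  intro k
  induction k with
  | zero => simp [Mbound, pSum]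
  | succ k ih =>
    have hR : 0 < Γ (k + 1) + γ (k + 1) := by
      have := hΓpos (k+1) (by omega); have := hγpos (k+1) (by omega); linarith
    have hC1 : (1:ℝ) ≤ (2 * (Γ (k + 1) + γ (k + 1)) + 1) ^ 2 := by nlinarith
    have hbox := card_siteBox_le hR
    rw [Mbound]
    push_cast
    calc ((siteBox ⌊Γ (k + 1) + γ (k + 1)⌋).card : ℝ) * ((Mbound Γ γ k : ℝ) * (Mbound Γ γ k : ℝ))
        ≤ ((2 * (Γ (k + 1) + γ (k + 1)) + 1) ^ 2) *
            (Real.exp (2 ^ k * pSum Γ γ k / 2) * Real.exp (2 ^ k * pSum Γ γ k / 2)) := by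
          have h0 : (0:ℝ) ≤ (Mbound Γ γ k : ℝ) := by positivity
          have he : (0:ℝ) < Real.exp (2 ^ k * pSum Γ γ k / 2) := Real.exp_pos _
          exact mul_le_mul hbox (mul_le_mul ih ih h0 he.le) (by positivity) (by positivity)
      _ = Real.exp (Real.log ((2 * (Γ (k + 1) + γ (k + 1)) + 1) ^ 2) + 2 ^ k * pSum Γ γ k) := by
          nth_rewrite 1 [← Real.exp_log (lt_of_lt_of_le one_pos hC1)]
          rw [← Real.exp_add, ← Real.exp_add]
          congr 1
          ring
      _ = Real.exp (2 ^ (k+1) * pSum Γ γ (k+1) / 2) := by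
          congr 1
          have h2 : (2:ℝ) ^ k * (2:ℝ) ^ (-(k:ℤ)) = 1 := by
            rw [zpow_neg, zpow_natCast]
            field_simp
          simp only [pSum, Finset.sum_range_succ]
          linear_combination (-Real.log ((2 * (Γ (k + 1) + γ (k + 1)) + 1) ^ 2)) * h2

section Geo
variable {Γ γ : ℕ → ℝ}

lemma exists_far_site {k : ℕ} (hΓk : 0 < Γ k) (hγk : 0 < γ k) {B : Set Site} {x : Site}
    (hxB : x ∈ B) (hx : x ∉ gentleStep Γ γ k B) :
    ∃ y ∈ B, Γ k / 2 < (dist1 x y : ℝ) ∧ (dist1 x y : ℝ) ≤ Γ k + γ k := by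
  set g := ball1 (Γ k) x ∩ B with hg
  have hxg : x ∈ g := by
    constructor
    · show ((dist1 x x : ℕ) : ℝ) ≤ Γ k
      rw [dist1_self]; exact_mod_cast hΓk.le
    · exact hxB
  have hnot : ¬ kAtom Γ γ k B g := fun h => hx ⟨g, h, hxg⟩
  have h1 : ∃ z ∈ B, g = ball1 (Γ k) z ∩ B := ⟨x, hxB, rfl⟩
  have h23 : ¬ ((∀ u ∈ g, ∀ w ∈ g, (dist1 u w : ℝ) ≤ Γ k) ∧
      ∀ u ∈ g, ∀ y ∈ B \ g, γ k < (dist1 u y : ℝ)) := fun h => hnot ⟨h1, h.1, h.2⟩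
  rcases not_and_or.mp h23 with h2 | h3
  · push_neg at h2
    obtain ⟨u, hu, w, hw, huw⟩ := h2
    have htri : (dist1 u w : ℝ) ≤ (dist1 x u : ℝ) + (dist1 x w : ℝ) := by
      rw [dist1_comm x u]
      exact_mod_cast dist1_triangle u x w
    by_cases hc : Γ k / 2 < (dist1 x u : ℝ)
    · exact ⟨u, hu.2, hc, le_trans hu.1 (by linarith)⟩
    · refine ⟨w, hw.2, ?_, le_trans hw.1 (by linarith)⟩
      push_neg at hc
      linarith
  · push_neg at h3
    obtain ⟨u, hu, y, hy, huy⟩ := h3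
    have hyb : ¬ ((dist1 x y : ℝ) ≤ Γ k) := by
      intro hle
      exact hy.2 ⟨hle, hy.1⟩
    push_neg at hyb
    refine ⟨y, hy.1, by linarith, ?_⟩
    have htri : (dist1 x y : ℝ) ≤ (dist1 x u : ℝ) + (dist1 u y : ℝ) := by
      exact_mod_cast dist1_triangle x u y
    have hub : (dist1 x u : ℝ) ≤ Γ k := hu.1
    linarith

lemma thetaSeq_zero : thetaSeq Γ γ 0 = 0 := by simp [thetaSeq]

lemma thetaSeq_succ (k : ℕ) :
    thetaSeq Γ γ (k + 1) = thetaSeq Γ γ k + (Γ (k + 1) + γ (k + 1)) := by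
  rw [thetaSeq, Finset.sum_Icc_succ_top (by omega), ← thetaSeq]

lemma thetaSeq_nonneg (hΓpos : ∀ k, 1 ≤ k → 0 < Γ k) (hγpos : ∀ k, 1 ≤ k → 0 < γ k) (k : ℕ) :
    0 ≤ thetaSeq Γ γ k := by
  apply Finset.sum_nonneg
  intro h hh
  rw [Finset.mem_Icc] at hh
  have := hΓpos h hh.1; have := hγpos h hh.1
  linarith

lemma thetaSeq_sep (hΓpos : ∀ k, 1 ≤ k → 0 < Γ k) (hγpos : ∀ k, 1 ≤ k → 0 < γ k)
    (hΓ1 : 2 ≤ Γ 1) (hsteep : ∀ k, 1 ≤ k → 5 ≤ Γ (k + 1) / thetaSeq Γ γ k) (k : ℕ) :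
    2 * thetaSeq Γ γ k ≤ Γ (k + 1) / 2 := by
  rcases Nat.eq_zero_or_pos k with rfl | hk
  · rw [thetaSeq_zero]; linarith
  · have hθ : 0 < thetaSeq Γ γ k := by
      apply Finset.sum_pos
      · intro h hh
        rw [Finset.mem_Icc] at hh
        have := hΓpos h hh.1; have := hγpos h hh.1
        linarith
      · exact ⟨1, Finset.mem_Icc.mpr ⟨le_refl 1, hk⟩⟩
    have h5 := hsteep k hk
    rw [le_div_iff₀ hθ] at h5
    linarith

/-- Main geometric lemma: a `k`-bad site spawns a tree of `2^k` distinct 0-bad sites. -/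
lemma tree_of_bad (hΓpos : ∀ k, 1 ≤ k → 0 < Γ k) (hγpos : ∀ k, 1 ≤ k → 0 < γ k)
    (hΓ1 : 2 ≤ Γ 1) (hsteep : ∀ k, 1 ≤ k → 5 ≤ Γ (k + 1) / thetaSeq Γ γ k) :
    ∀ (k : ℕ) (ω : Omega) (x : Site), x ∈ BB Γ γ ω k →
      ∃ L ∈ Ttree Γ γ k x, L.Nodup ∧ (∀ i ∈ L, ω i = true) ∧
        ∀ i ∈ L, (dist1 x i : ℝ) ≤ thetaSeq Γ γ k := by
  intro k
  induction k with
  | zero =>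
    intro ω x hx
    refine ⟨[x], by simp [Ttree], by simp, ?_, ?_⟩
    · intro i hi
      rw [List.mem_singleton] at hi
      subst hi
      exact hx
    · intro i hi
      rw [List.mem_singleton] at hi
      subst hi
      rw [dist1_self, thetaSeq_zero]
      simp
  | succ k ih =>
    intro ω x hx
    obtain ⟨hxk, hxg⟩ := hx
    obtain ⟨y, hyB, hylow, hyhigh⟩ :=
      exists_far_site (Γ := Γ) (γ := γ) (hΓpos (k+1) (by omega)) (hγpos (k+1) (by omega)) hxk hxg
    obtain ⟨L1, hL1T, hL1nd, hL1bad, hL1θ⟩ := ih ω x hxk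
    obtain ⟨L2, hL2T, hL2nd, hL2bad, hL2θ⟩ := ih ω y hyB
    set v : Site := y - x with hv
    have hxv : x + v = y := by rw [hv]; ring
    have hRpos : 0 < Γ (k+1) + γ (k+1) := by
      have := hΓpos (k+1) (by omega); have := hγpos (k+1) (by omega); linarith
    have hvbox : v ∈ siteBox ⌊Γ (k + 1) + γ (k + 1)⌋ := by
      rw [mem_siteBox]
      have h1 : (v.1.natAbs : ℝ) ≤ Γ (k + 1) + γ (k + 1) := by
        refine le_trans ?_ hyhigh
        have hle : v.1.natAbs ≤ dist1 x y := by
          simp only [dist1, hv, Prod.fst_sub]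
          omega
        exact_mod_cast hle
      have h2 : (v.2.natAbs : ℝ) ≤ Γ (k + 1) + γ (k + 1) := by
        refine le_trans ?_ hyhigh
        have hle : v.2.natAbs ≤ dist1 x y := by
          simp only [dist1, hv, Prod.snd_sub]
          omega
        exact_mod_cast hle
      have h1' : |v.1| ≤ ⌊Γ (k + 1) + γ (k + 1)⌋ := by
        rw [Int.le_floor]
        rw [Int.cast_abs]
        rw [Nat.cast_natAbs] at h1
        exact_mod_cast h1
      have h2' : |v.2| ≤ ⌊Γ (k + 1) + γ (k + 1)⌋ := by
        rw [Int.le_floor]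
        rw [Int.cast_abs]
        rw [Nat.cast_natAbs] at h2
        exact_mod_cast h2
      exact ⟨abs_le.mp h1', abs_le.mp h2'⟩
    have hsep : 2 * thetaSeq Γ γ k < (dist1 x y : ℝ) :=
      lt_of_le_of_lt (thetaSeq_sep hΓpos hγpos hΓ1 hsteep k) hylow
    refine ⟨L1 ++ L2, ?_, ?_, ?_, ?_⟩
    · rw [Ttree]
      rw [Finset.mem_biUnion]
      refine ⟨v, hvbox, ?_⟩
      rw [Finset.mem_biUnion]
      refine ⟨L1, hL1T, ?_⟩
      rw [Finset.mem_image]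
      exact ⟨L2, by rw [hxv]; exact hL2T, rfl⟩
    · rw [List.nodup_append]
      refine ⟨hL1nd, hL2nd, ?_⟩
      intro a ha1 b ha2 hab
      subst hab
      have d1 := hL1θ a ha1
      have d2 := hL2θ a ha2
      have htri : (dist1 x y : ℝ) ≤ (dist1 x a : ℝ) + (dist1 y a : ℝ) := by
        rw [dist1_comm y a]
        exact_mod_cast dist1_triangle x a y
      linarith
    · intro i hi
      rcases List.mem_append.mp hi with h | h
      · exact hL1bad i h
      · exact hL2bad i h
    · intro i hi
      rw [thetaSeq_succ]
      have hθ0 := thetaSeq_nonneg hΓpos hγpos k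
      rcases List.mem_append.mp hi with h | h
      · have := hL1θ i h
        linarith
      · have htri : (dist1 x i : ℝ) ≤ (dist1 x y : ℝ) + (dist1 y i : ℝ) := by
          exact_mod_cast dist1_triangle x y i
        have := hL2θ i h
        linarith

end Geo

section Prob

lemma extSigma_le : extSigma ≤ (inferInstance : MeasurableSpace Omega) :=
  Measurable.comap_le (measurable_pi_lambda _ fun j => measurable_pi_apply _)

lemma measE : MeasurableSet {ω : Omega | ω 0 = true} := by
  have : {ω : Omega | ω 0 = true} = (fun ω : Omega => ω 0) ⁻¹' {true} := by
    ext ω; simp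
  rw [this]
  exact (measurable_pi_apply 0) (measurableSet_singleton true)

lemma meas_listEvent (L : List Site) :
    MeasurableSet {ω : Omega | ∀ i ∈ L, ω i = true} := by
  have h : {ω : Omega | ∀ i ∈ L, ω i = true} =
      ⋂ i ∈ {i : Site | i ∈ L}, (fun ω : Omega => ω i) ⁻¹' {true} := by
    ext ω; simp
  rw [h]
  exact MeasurableSet.biInter (L.finite_toSet.countable)
    (fun i _ => (measurable_pi_apply i) (measurableSet_singleton true))

lemma extMeas_listEvent (L : List Site) (h0 : (0 : Site) ∉ L) :
    MeasurableSet[extSigma] {ω : Omega | ∀ i ∈ L, ω i = true} := by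
  rw [extSigma, MeasurableSpace.measurableSet_comap]
  refine ⟨⋂ j ∈ {j : {j : Site // j ≠ 0} | (j : Site) ∈ L}, (fun η => η j) ⁻¹' {true}, ?_, ?_⟩
  · refine MeasurableSet.biInter ?_ (fun j _ => (measurable_pi_apply j) (measurableSet_singleton true))
    exact Set.Countable.preimage_of_injOn L.finite_toSet.countable
      (Set.injOn_of_injective Subtype.coe_injective)
  · ext ω
    simp only [Set.mem_preimage, Set.mem_iInter, Set.mem_setOf_eq, Set.mem_singleton_iff]
    constructor
    · intro h i hi
      exact h ⟨i, fun he => h0 (he ▸ hi)⟩ hi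
    · intro h j hj
      exact h j hj

lemma condBadProb_le_one (Q : Measure Omega) [IsProbabilityMeasure Q] :
    condBadProb Q ≤ᵐ[Q] fun _ => (1 : ℝ) := by
  have hint : Integrable (Set.indicator {ω : Omega | ω 0 = true} (fun _ => (1 : ℝ))) Q :=
    (integrable_const (1 : ℝ)).indicator measE
  have hle : Set.indicator {ω : Omega | ω 0 = true} (fun _ => (1 : ℝ)) ≤ᵐ[Q] fun _ => (1 : ℝ) := by
    filter_upwards with ω
    exact Set.indicator_le_self' (fun _ _ => zero_le_one) ω
  have := condExp_mono (m := extSigma) hint (integrable_const 1) hle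
  rwa [condExp_const extSigma_le] at this

lemma condBadProb_nonneg (Q : Measure Omega) [IsProbabilityMeasure Q] :
    0 ≤ᵐ[Q] condBadProb Q := by
  apply condExp_nonneg
  filter_upwards with ω
  exact Set.indicator_nonneg (fun _ _ => zero_le_one) ω

lemma condBadProb_bdd (Q : Measure Omega) [IsProbabilityMeasure Q] :
    Filter.IsBoundedUnder (· ≤ ·) (ae Q) (condBadProb Q) :=
  ⟨1, Filter.eventually_map.mpr (condBadProb_le_one Q)⟩

lemma condBadProb_le_badParam (Q : Measure Omega) [IsProbabilityMeasure Q] :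
    condBadProb Q ≤ᵐ[Q] fun _ => badParam Q :=
  ae_le_essSup (condBadProb_bdd Q)

lemma badParam_nonneg (Q : Measure Omega) [IsProbabilityMeasure Q] : 0 ≤ badParam Q := by
  have hne : (ae Q).NeBot := ae_neBot.mpr (IsProbabilityMeasure.ne_zero Q)
  exact Filter.le_limsup_of_frequently_le ((condBadProb_nonneg Q).frequently) (condBadProb_bdd Q)

/-- Core conditioning step:  `Q({ω₀ = 1} ∩ A) ≤ p · Q(A)` for `A` in the external σ-algebra. -/
lemma core_step (Q : Measure Omega) [IsProbabilityMeasure Q] {A : Set Omega}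
    (hA : MeasurableSet[extSigma] A) :
    Q ({ω : Omega | ω 0 = true} ∩ A) ≤ ENNReal.ofReal (badParam Q) * Q A := by
  have hA' : MeasurableSet A := extSigma_le _ hA
  have hint : Integrable (Set.indicator {ω : Omega | ω 0 = true} (fun _ => (1 : ℝ))) Q :=
    (integrable_const (1 : ℝ)).indicator measE
  have h1 : ((Q ({ω : Omega | ω 0 = true} ∩ A)).toReal : ℝ) =
      ∫ ω in A, Set.indicator {ω : Omega | ω 0 = true} (fun _ => (1 : ℝ)) ω ∂Q := by
    rw [setIntegral_indicator measE, setIntegral_const, Set.inter_comm]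
    simp
    rfl
  have h2 : ∫ ω in A, Set.indicator {ω : Omega | ω 0 = true} (fun _ => (1 : ℝ)) ω ∂Q =
      ∫ ω in A, condBadProb Q ω ∂Q :=
    (setIntegral_condExp extSigma_le hint hA).symm
  have h3 : ∫ ω in A, condBadProb Q ω ∂Q ≤ ∫ ω in A, (fun _ => badParam Q) ω ∂Q := by
    apply integral_mono_ae (integrable_condExp.restrict) (integrable_const _)
    exact ae_restrict_of_ae (condBadProb_le_badParam Q)
  have h4 : ∫ ω in A, (fun _ => badParam Q) ω ∂Q = (Q A).toReal * badParam Q := by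
    rw [setIntegral_const]
    simp [smul_eq_mul]
    left; rfl
  have h5 : (Q ({ω : Omega | ω 0 = true} ∩ A)).toReal ≤ badParam Q * (Q A).toReal := by
    rw [h1, h2]
    rw [h4] at h3
    linarith
  calc Q ({ω : Omega | ω 0 = true} ∩ A)
      = ENNReal.ofReal ((Q ({ω : Omega | ω 0 = true} ∩ A)).toReal) := by
        rw [ENNReal.ofReal_toReal (measure_ne_top Q _)]
    _ ≤ ENNReal.ofReal (badParam Q * (Q A).toReal) := ENNReal.ofReal_le_ofReal h5
    _ = ENNReal.ofReal (badParam Q) * ENNReal.ofReal ((Q A).toReal) := by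
        rw [ENNReal.ofReal_mul (badParam_nonneg Q)]
    _ = ENNReal.ofReal (badParam Q) * Q A := by
        rw [ENNReal.ofReal_toReal (measure_ne_top Q _)]

lemma prob_all_bad (Q : Measure Omega) [IsProbabilityMeasure Q] (hinv : TransInvariant Q) :
    ∀ (n : ℕ) (L : List Site), L.length = n → L.Nodup →
      Q {ω : Omega | ∀ i ∈ L, ω i = true} ≤ ENNReal.ofReal (badParam Q ^ n) := by
  intro n
  induction n with
  | zero =>
    intro L hlen _
    rw [List.length_eq_zero_iff] at hlen
    subst hlen
    simp only [List.not_mem_nil, false_implies, implies_true, Set.setOf_true]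
    simp [pow_zero]
  | succ n ihn =>
    intro L hlen hnd
    obtain ⟨i, L', rfl⟩ : ∃ i L', L = i :: L' := by
      cases L with
      | nil => simp at hlen
      | cons a l => exact ⟨a, l, rfl⟩
    have hlen' : L'.length = n := by simpa using hlen
    have hndL' : L'.Nodup := (List.nodup_cons.mp hnd).2
    have hiL' : i ∉ L' := (List.nodup_cons.mp hnd).1
    -- translate by i
    set Tm : Omega → Omega := fun ω x => ω (x + i) with hTm
    have hTmeas : Measurable Tm :=
      measurable_pi_lambda _ fun x => measurable_pi_apply _
    set L0 : List Site := (i :: L').map (fun z => z - i) with hL0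
    have hpre : {ω : Omega | ∀ j ∈ (i :: L'), ω j = true} =
        Tm ⁻¹' {ω : Omega | ∀ j ∈ L0, ω j = true} := by
      ext ω
      simp only [Set.mem_preimage, Set.mem_setOf_eq, hL0, List.mem_map, hTm]
      constructor
      · rintro h j ⟨z, hz, rfl⟩
        rw [sub_add_cancel]
        exact h z hz
      · intro h z hz
        have := h (z - i) ⟨z, hz, rfl⟩
        rwa [sub_add_cancel] at this
    have hQeq : Q {ω : Omega | ∀ j ∈ (i :: L'), ω j = true} =
        Q {ω : Omega | ∀ j ∈ L0, ω j = true} := by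
      rw [hpre, ← Measure.map_apply hTmeas (meas_listEvent L0)]
      rw [hinv i]
    set L'0 : List Site := L'.map (fun z => z - i) with hL'0
    have hL0eq : L0 = 0 :: L'0 := by simp [hL0, hL'0]
    have hsplit : {ω : Omega | ∀ j ∈ L0, ω j = true} =
        {ω : Omega | ω 0 = true} ∩ {ω : Omega | ∀ j ∈ L'0, ω j = true} := by
      rw [hL0eq]
      ext ω
      simp [List.mem_cons]
    have h0notin : (0 : Site) ∉ L'0 := by
      simp only [hL'0, List.mem_map, not_exists]
      rintro z ⟨hz, hz0⟩
      exact hiL' (by rwa [sub_eq_zero.mp hz0] at hz)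
    have hndL'0 : L'0.Nodup := hndL'.map sub_left_injective
    have hlen'0 : L'0.length = n := by simp [hL'0, hlen']
    calc Q {ω : Omega | ∀ j ∈ (i :: L'), ω j = true}
        = Q ({ω : Omega | ω 0 = true} ∩ {ω : Omega | ∀ j ∈ L'0, ω j = true}) := by
          rw [hQeq, hsplit]
      _ ≤ ENNReal.ofReal (badParam Q) * Q {ω : Omega | ∀ j ∈ L'0, ω j = true} :=
          core_step Q (extMeas_listEvent L'0 h0notin)
      _ ≤ ENNReal.ofReal (badParam Q) * ENNReal.ofReal (badParam Q ^ n) :=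
          mul_le_mul_right (ihn L'0 hlen'0 hndL'0) _
      _ = ENNReal.ofReal (badParam Q ^ (n + 1)) := by
          rw [pow_succ, ENNReal.ofReal_mul (pow_nonneg (badParam_nonneg Q) n), mul_comm]

end Prob

/-- Doubly exponential decay of badness.  Under the steepness conditions on
`Γ, γ`, if `Q` is a translation-invariant probability measure on `Ω` whose conditional
badness parameter `p` satisfies `p < e^{-a₀/2}`, then with `a := -log p - a₀/2 > 0` one
has `Q(x ∈ BB_k) ≤ exp(-a 2^k)` for every `x` and `k ≥ 0`. -/
theorem doubly_exponential_badness (Γ γ : ℕ → ℝ)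
    (hΓpos : ∀ k, 1 ≤ k → 0 < Γ k) (hγpos : ∀ k, 1 ≤ k → 0 < γ k)
    (hΓmono : ∀ k, 1 ≤ k → Γ k < Γ (k + 1)) (hγmono : ∀ k, 1 ≤ k → γ k < γ (k + 1))
    (hΓ1 : 2 ≤ Γ 1) (hΓγ : ∀ k, 1 ≤ k → Γ k < γ k / 2)
    (hsteep : ∀ k, 1 ≤ k → 5 ≤ Γ (k + 1) / thetaSeq Γ γ k)
    (ha0 : Summable fun k : ℕ =>
      (2 : ℝ) ^ (-(k : ℤ)) * Real.log ((2 * (Γ (k + 1) + γ (k + 1)) + 1) ^ 2))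
    (Q : Measure Omega) [IsProbabilityMeasure Q] (hinv : TransInvariant Q)
    (hp : badParam Q < Real.exp (-(aZero Γ γ) / 2)) :
    ∀ (x : Site) (k : ℕ),
      Q {ω | x ∈ BB Γ γ ω k} ≤
        ENNReal.ofReal (Real.exp (-(-Real.log (badParam Q) - aZero Γ γ / 2) * 2 ^ k)) := by
  classical
  intro x k
  have hp0 : 0 ≤ badParam Q := badParam_nonneg Q
  have hterm_nonneg : ∀ j : ℕ,
      0 ≤ (2 : ℝ) ^ (-(j : ℤ)) * Real.log ((2 * (Γ (j + 1) + γ (j + 1)) + 1) ^ 2) := by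
    intro j
    have h1 : 0 < Γ (j + 1) := hΓpos (j + 1) (by omega)
    have h2 : 0 < γ (j + 1) := hγpos (j + 1) (by omega)
    have hC1 : (1 : ℝ) ≤ (2 * (Γ (j + 1) + γ (j + 1)) + 1) ^ 2 := by nlinarith
    exact mul_nonneg (by positivity) (Real.log_nonneg hC1)
  have ha0nn : 0 ≤ aZero Γ γ := tsum_nonneg hterm_nonneg
  rcases eq_or_lt_of_le hp0 with hp0' | hppos
  · -- degenerate case `p = 0`
    have h2 : -(-Real.log (badParam Q) - aZero Γ γ / 2) * 2 ^ k
        = (aZero Γ γ / 2) * 2 ^ k := by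
      rw [← hp0', Real.log_zero]; ring
    have h1 : (1 : ENNReal) ≤
        ENNReal.ofReal (Real.exp (-(-Real.log (badParam Q) - aZero Γ γ / 2) * 2 ^ k)) := by
      rw [← ENNReal.ofReal_one]
      apply ENNReal.ofReal_le_ofReal
      apply Real.one_le_exp
      rw [h2]
      have h3 : (0:ℝ) ≤ (2:ℝ) ^ k := by positivity
      nlinarith
    exact le_trans prob_le_one h1
  · -- main case `p > 0`
    set F : Finset (List Site) := (Ttree Γ γ k x).filter (fun L => L.Nodup) with hF
    have hsub : {ω : Omega | x ∈ BB Γ γ ω k} ⊆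
        ⋃ L ∈ F, {ω : Omega | ∀ i ∈ L, ω i = true} := by
      intro ω hω
      obtain ⟨L, hLT, hnd, hbad, -⟩ := tree_of_bad hΓpos hγpos hΓ1 hsteep k ω x hω
      exact Set.mem_iUnion₂.mpr ⟨L, Finset.mem_filter.mpr ⟨hLT, hnd⟩, hbad⟩
    have hcard : F.card ≤ Mbound Γ γ k :=
      le_trans (Finset.card_filter_le _ _) (Ttree_card_le Γ γ k x)
    have hpSum : pSum Γ γ k ≤ aZero Γ γ :=
      Summable.sum_le_tsum (Finset.range k) (fun j _ => hterm_nonneg j) ha0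
    have hMb : (Mbound Γ γ k : ℝ) ≤ Real.exp (2 ^ k * aZero Γ γ / 2) := by
      refine le_trans (Mbound_le_exp Γ γ hΓpos hγpos k) ?_
      apply Real.exp_le_exp.mpr
      have h3 : (0:ℝ) ≤ (2:ℝ) ^ k := by positivity
      have := mul_le_mul_of_nonneg_left hpSum h3
      linarith
    calc Q {ω : Omega | x ∈ BB Γ γ ω k}
        ≤ Q (⋃ L ∈ F, {ω : Omega | ∀ i ∈ L, ω i = true}) := measure_mono hsub
      _ ≤ ∑ L ∈ F, Q {ω : Omega | ∀ i ∈ L, ω i = true} := measure_biUnion_finset_le F _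
      _ ≤ ∑ _L ∈ F, ENNReal.ofReal (badParam Q ^ (2 ^ k)) := by
          apply Finset.sum_le_sum
          intro L hL
          exact prob_all_bad Q hinv (2 ^ k) L
            (Ttree_length Γ γ k x L (Finset.mem_filter.mp hL).1) (Finset.mem_filter.mp hL).2
      _ = F.card • ENNReal.ofReal (badParam Q ^ (2 ^ k)) := by rw [Finset.sum_const]
      _ ≤ (Mbound Γ γ k) • ENNReal.ofReal (badParam Q ^ (2 ^ k)) := by
          rw [nsmul_eq_mul, nsmul_eq_mul]
          exact mul_le_mul_left (by exact_mod_cast hcard) _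
      _ = ENNReal.ofReal ((Mbound Γ γ k : ℝ) * badParam Q ^ (2 ^ k)) := by
          rw [nsmul_eq_mul, ← ENNReal.ofReal_natCast (Mbound Γ γ k),
            ← ENNReal.ofReal_mul (by positivity)]
      _ ≤ ENNReal.ofReal (Real.exp (2 ^ k * aZero Γ γ / 2) * badParam Q ^ (2 ^ k)) := by
          apply ENNReal.ofReal_le_ofReal
          exact mul_le_mul_of_nonneg_right hMb (pow_nonneg hp0 _)
      _ = ENNReal.ofReal (Real.exp (-(-Real.log (badParam Q) - aZero Γ γ / 2) * 2 ^ k)) := by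
          congr 1
          have hplog : badParam Q ^ (2 ^ k : ℕ)
              = Real.exp (((2 ^ k : ℕ) : ℝ) * Real.log (badParam Q)) := by
            rw [Real.exp_nat_mul, Real.exp_log hppos]
          rw [hplog, ← Real.exp_add]
          congr 1
          push_cast
          ring
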